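/- Let κ be a positive definite kernel on Ω with native reproducing kernel Hilbert space N_κ, and let L(Ω) denote the span of point evaluation functionals δ_x, x ∈ Ω, in the dual of N_κ. Then a function f : Ω → ℝ belongs to N_κ if and only if there exists a constant C_f such that |λ(f)| ≤ C_f·‖λ‖_{N_κ*} for all λ ∈ L(Ω), and in that case ‖f‖_{N_κ} = sup_{λ ∈ L(Ω), λ≠0} λ(f)/‖λ‖_{N_κ*}. -/

import Mathlib

open Set

/-- A kernel `κ` on `Ω` is positive definite. -/
def IsPosDefKernel {Ω : Type*} (κ : Ω → Ω → ℝ) : Prop :=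
  ∀ (N : ℕ) (x : Fin N → Ω), Function.Injective x →
    ∀ c : Fin N → ℝ, c ≠ 0 → 0 < ∑ i, ∑ j, c i * c j * κ (x i) (x j)

/-- A realization of the native space of a kernel `κ : Ω × Ω → ℝ`: a real Hilbert space `H`
of functions on `Ω` (via the injective linear evaluation map `eval`), containing the kernel
translates `κ(·,x)` (the `feature` vectors), in which the reproducing property
`⟨f, κ(·,x)⟩ = f(x)` holds and the span of the kernel translates is dense. -/
structure NativeSpace (Ω : Type*) (κ : Ω → Ω → ℝ) (H : Type*)
    [NormedAddCommGroup H] [InnerProductSpace ℝ H] [CompleteSpace H] where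
  eval : H →ₗ[ℝ] (Ω → ℝ)
  eval_injective : Function.Injective eval
  feature : Ω → H
  eval_feature : ∀ x y : Ω, eval (feature x) y = κ y x
  reproducing : ∀ (f : H) (x : Ω), (inner ℝ f (feature x) : ℝ) = eval f x
  dense_span : Dense ((Submodule.span ℝ (Set.range feature) : Submodule ℝ H) : Set H)

section aux
variable {Ω : Type*} {κ : Ω → Ω → ℝ} {H : Type*} [NormedAddCommGroup H]
  [InnerProductSpace ℝ H] [CompleteSpace H]

lemma inner_sum_feature (ns : NativeSpace Ω κ H) (F : H) (N : ℕ) (α : Fin N → ℝ)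
    (x : Fin N → Ω) :
    (inner ℝ F (∑ j, α j • ns.feature (x j)) : ℝ) = ∑ j, α j * ns.eval F (x j) := by
  rw [inner_sum]
  refine Finset.sum_congr rfl fun j _ => ?_
  rw [real_inner_smul_right, ns.reproducing]

lemma finsupp_sum_fin {Ω : Type*} {M : Type*} [AddCommMonoid M] [Module ℝ M]
    (l : Ω →₀ ℝ) (v : Ω → M) :
    ∑ j : Fin l.support.card,
        l ((l.support.equivFin.symm j : _) : Ω) • v ((l.support.equivFin.symm j : _) : Ω)
      = l.sum fun a c => c • v a := by
  rw [Finsupp.sum, ← Finset.sum_coe_sort l.support (fun a => l a • v a)]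
  exact Fintype.sum_equiv l.support.equivFin.symm _ _ (fun j => rfl)

lemma exists_eval_of_bound (ns : NativeSpace Ω κ H) (f : Ω → ℝ) (C : ℝ)
    (hC : ∀ (N : ℕ) (α : Fin N → ℝ) (x : Fin N → Ω),
      |∑ j, α j * f (x j)| ≤ C * ‖∑ j, α j • ns.feature (x j)‖) :
    ∃ F : H, ns.eval F = f := by
  set S : (Ω →₀ ℝ) →ₗ[ℝ] H := Finsupp.linearCombination ℝ ns.feature with hS
  set T : (Ω →₀ ℝ) →ₗ[ℝ] ℝ := Finsupp.linearCombination ℝ f with hT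
  have key : ∀ l : Ω →₀ ℝ, |T l| ≤ C * ‖S l‖ := by
    intro l
    have h1 : S l = ∑ j : Fin l.support.card,
        l ((l.support.equivFin.symm j : _) : Ω) • ns.feature ((l.support.equivFin.symm j : _) : Ω) := by
      rw [hS, Finsupp.linearCombination_apply, ← finsupp_sum_fin]
    have h2 : T l = ∑ j : Fin l.support.card,
        l ((l.support.equivFin.symm j : _) : Ω) * f ((l.support.equivFin.symm j : _) : Ω) := by
      rw [hT, Finsupp.linearCombination_apply, ← finsupp_sum_fin]
      simp [smul_eq_mul]
    rw [h1, h2]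
    exact hC _ _ _
  have hker : LinearMap.ker S ≤ LinearMap.ker T := by
    intro l hl
    rw [LinearMap.mem_ker] at hl ⊢
    have h := key l
    rw [hl, norm_zero, mul_zero] at h
    exact abs_eq_zero.mp (le_antisymm h (abs_nonneg _))
  let φ : LinearMap.range S →ₗ[ℝ] ℝ :=
    (Submodule.liftQ (LinearMap.ker S) T hker).comp
      (LinearMap.quotKerEquivRange S).symm.toLinearMap
  have hφ : ∀ l : Ω →₀ ℝ, φ ⟨S l, LinearMap.mem_range_self S l⟩ = T l := by
    intro l
    have h1 : (LinearMap.quotKerEquivRange S).symm ⟨S l, LinearMap.mem_range_self S l⟩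
        = Submodule.Quotient.mk l := by
      rw [LinearEquiv.symm_apply_eq]
      exact Subtype.ext (LinearMap.quotKerEquivRange_apply_mk S l)
    simp only [φ, LinearMap.comp_apply, LinearEquiv.coe_toLinearMap, h1,
      Submodule.liftQ_apply]
  have hbound : ∀ g : LinearMap.range S, ‖φ g‖ ≤ C * ‖g‖ := by
    rintro ⟨g, hg⟩
    obtain ⟨l, rfl⟩ := hg
    rw [Real.norm_eq_abs, show (⟨S l, ⟨l, rfl⟩⟩ : LinearMap.range S)
        = ⟨S l, LinearMap.mem_range_self S l⟩ from rfl, hφ]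
    exact key l
  let φc := LinearMap.mkContinuous φ C hbound
  let e := (LinearMap.range S).subtypeL
  have hdense : DenseRange e := by
    have hr : Set.range e = ((LinearMap.range S : Submodule ℝ H) : Set H) :=
      Subtype.range_coe
    rw [DenseRange, hr, hS, Finsupp.range_linearCombination]
    exact ns.dense_span
  have huni : IsUniformInducing e := isometry_subtype_coe.isUniformInducing
  let Φ := φc.extend e
  refine ⟨(InnerProductSpace.toDual ℝ H).symm Φ, funext fun x => ?_⟩
  have hx : ns.feature x = S (Finsupp.single x 1) := by
    simp [hS, Finsupp.linearCombination_single]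
  have hmem : ns.feature x ∈ LinearMap.range S := ⟨Finsupp.single x 1, hx.symm⟩
  have h3 : Φ (ns.feature x) = φc ⟨ns.feature x, hmem⟩ := by
    have := ContinuousLinearMap.extend_eq φc hdense huni ⟨ns.feature x, hmem⟩
    simpa [e] using this
  have h4 : φc ⟨ns.feature x, hmem⟩ = f x := by
    have : (⟨ns.feature x, hmem⟩ : LinearMap.range S)
        = ⟨S (Finsupp.single x 1), LinearMap.mem_range_self S _⟩ := Subtype.ext hx
    rw [show φc ⟨ns.feature x, hmem⟩ = φ ⟨ns.feature x, hmem⟩ from rfl, this, hφ, hT,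
      Finsupp.linearCombination_single, one_smul]
  calc ns.eval ((InnerProductSpace.toDual ℝ H).symm Φ) x
      = inner ℝ ((InnerProductSpace.toDual ℝ H).symm Φ) (ns.feature x) :=
        (ns.reproducing _ _).symm
    _ = Φ (ns.feature x) := InnerProductSpace.toDual_symm_apply
    _ = f x := by rw [h3, h4]

end aux

/-- Madych–Nelson variational characterization of the native space. A function
`f : Ω → ℝ` belongs to `N_κ` iff `|λ(f)| ≤ C_f ‖λ‖_{N_κ*}` for all finite linear
combinations `λ = ∑ αⱼ δ_{xⱼ}` of point evaluations, where
`‖λ‖_{N_κ*} = ‖∑ αⱼ κ(·,xⱼ)‖_{N_κ}`; and in that case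
`‖f‖_{N_κ} = sup_{λ ≠ 0} λ(f)/‖λ‖_{N_κ*}`. -/
theorem madych_nelson_characterization {Ω : Type*} [Nonempty Ω] {κ : Ω → Ω → ℝ}
    (hκ : IsPosDefKernel κ) {H : Type*} [NormedAddCommGroup H] [InnerProductSpace ℝ H]
    [CompleteSpace H] (ns : NativeSpace Ω κ H) :
    (∀ f : Ω → ℝ,
      (∃ F : H, ns.eval F = f) ↔
        ∃ C : ℝ, ∀ (N : ℕ) (α : Fin N → ℝ) (x : Fin N → Ω),
          |∑ j, α j * f (x j)| ≤ C * ‖∑ j, α j • ns.feature (x j)‖) ∧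
    (∀ F : H, ‖F‖ = sSup {r : ℝ | ∃ (N : ℕ) (α : Fin N → ℝ) (x : Fin N → Ω),
        (∑ j, α j • ns.feature (x j)) ≠ 0 ∧
        r = (∑ j, α j * ns.eval F (x j)) / ‖∑ j, α j • ns.feature (x j)‖}) := by
  have hfx : ∀ x : Ω, ns.feature x ≠ 0 := by
    intro x h
    have h0 := hκ 1 (fun _ => x) (Function.injective_of_subsingleton _) (fun _ => 1)
      (by intro hc; simpa using congrFun hc 0)
    have hκ0 : κ x x = 0 := by
      have := ns.eval_feature x x
      rw [h] at this
      simpa using this.symm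
    simp [hκ0] at h0
  constructor
  · intro f
    constructor
    · rintro ⟨F, rfl⟩
      refine ⟨‖F‖, fun N α x => ?_⟩
      rw [← inner_sum_feature ns]
      exact abs_real_inner_le_norm F _
    · rintro ⟨C, hC⟩
      exact exists_eval_of_bound ns f C hC
  · intro F
    set s := {r : ℝ | ∃ (N : ℕ) (α : Fin N → ℝ) (x : Fin N → Ω),
        (∑ j, α j • ns.feature (x j)) ≠ 0 ∧
        r = (∑ j, α j * ns.eval F (x j)) / ‖∑ j, α j • ns.feature (x j)‖} with hs
    have hub : ∀ r ∈ s, r ≤ ‖F‖ := by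
      rintro r ⟨N, α, x, hg, rfl⟩
      rw [← inner_sum_feature ns]
      rw [div_le_iff₀ (norm_pos_iff.2 hg)]
      exact real_inner_le_norm F _
    have hwit : ∀ x₀ : Ω,
        (ns.eval F x₀) / ‖ns.feature x₀‖ ∈ s := by
      intro x₀
      refine ⟨1, fun _ => 1, fun _ => x₀, by simpa using hfx x₀, by simp⟩
    have hne : s.Nonempty := ⟨_, hwit (Classical.arbitrary Ω)⟩
    have hbdd : BddAbove s := ⟨‖F‖, hub⟩
    refine le_antisymm ?_ (csSup_le hne hub)
    by_cases hF : F = 0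
    · subst hF
      have h0 : (0 : ℝ) ∈ s := by
        have := hwit (Classical.arbitrary Ω)
        simpa using this
      simpa using le_csSup hbdd h0
    · refine le_of_forall_pos_le_add fun ε hε => ?_
      have hFn : 0 < ‖F‖ := norm_pos_iff.2 hF
      set δ := min (ε / 2) (‖F‖ / 2) with hδ
      have hδ0 : 0 < δ := lt_min (by linarith) (by linarith)
      have hδF : δ ≤ ‖F‖ / 2 := min_le_right _ _
      have hδε : δ ≤ ε / 2 := min_le_left _ _
      obtain ⟨g, hgs, hgd⟩ := ns.dense_span.exists_dist_lt F hδ0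
      obtain ⟨N, α, xx, hrep⟩ : ∃ (N : ℕ) (α : Fin N → ℝ) (xx : Fin N → Ω),
          ∑ j, α j • ns.feature (xx j) = g := by
        rw [SetLike.mem_coe, Submodule.mem_span_set'] at hgs
        obtain ⟨n, c, v, hv⟩ := hgs
        choose y hy using fun i => (v i).2
        exact ⟨n, c, y, by rw [← hv]; exact Finset.sum_congr rfl fun i _ => by rw [hy]⟩
      have hdist : ‖F - g‖ < δ := by rwa [← dist_eq_norm]
      have hgnl : ‖F‖ - δ ≤ ‖g‖ := by
        have := norm_sub_norm_le F g
        linarith [this.trans hdist.le]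
      have hg0 : g ≠ 0 := by
        intro h
        rw [h, norm_zero] at hgnl
        linarith
      have hgn : 0 < ‖g‖ := norm_pos_iff.2 hg0
      have hgu : ‖g‖ ≤ ‖F‖ + δ := by
        have := norm_le_norm_add_norm_sub' g F
        have h2 : ‖g - F‖ < δ := by rwa [norm_sub_rev]
        linarith
      have hinner : ‖F‖ ^ 2 - ‖F‖ * δ ≤ (inner ℝ F g : ℝ) := by
        have h1 : (inner ℝ F g : ℝ) = (inner ℝ F F : ℝ) + inner ℝ F (g - F) := by
          rw [← inner_add_right]; congr 1; abel
        have h2 : (inner ℝ F (g - F) : ℝ) ≥ -(‖F‖ * ‖g - F‖) := by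
          have := abs_real_inner_le_norm F (g - F)
          have := abs_le.mp this
          linarith [this.1]
        have h3 : ‖g - F‖ < δ := by rwa [norm_sub_rev]
        rw [h1, real_inner_self_eq_norm_sq]
        nlinarith
      set r := (inner ℝ F g : ℝ) / ‖g‖ with hr
      have hrs : r ∈ s := by
        refine ⟨N, α, xx, by rwa [hrep], ?_⟩
        rw [hr, ← inner_sum_feature ns, hrep]
      have hrge : ‖F‖ - ε ≤ r := by
        rw [hr, le_div_iff₀ hgn]
        nlinarith
      have := le_csSup hbdd hrs
      linarith
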